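/- Let d ≥ 1 and let V : ℝ^d → ℝ be continuously differentiable with V and ∇V of at most polynomial growth and e^{−V} integrable; let π(x) = e^{−V(x)}/Z be the associated probability density. Fix ε > 0 and let p_{m}(x) = k_ε(x − m). Then the gradient with respect to m of the map m ↦ KL(N(m, εI_d) | π) = ∫ p_m(x) log(p_m(x)/π(x)) dx exists and equals E_{N(m, εI_d)}[∇ log(p_m/π)] = ∫ ∇ log(p_m/π)(x) p_m(x) dx, which moreover equals E_{N(m, εI_d)}[∇V]. -/

import Mathlib

open MeasureTheory Real

/-- Density of the isotropic Gaussian `N(m, ε I_d)` on `ℝ^d`. -/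
noncomputable def gaussPDF (d : ℕ) (m : EuclideanSpace ℝ (Fin d)) (ε : ℝ)
    (x : EuclideanSpace ℝ (Fin d)) : ℝ :=
  (2 * Real.pi * ε) ^ (-(d : ℝ) / 2) * Real.exp (-‖x - m‖ ^ 2 / (2 * ε))


variable {d : ℕ}

lemma integrable_gauss_aux {b : ℝ} (hb : 0 < b) :
    Integrable (fun x : EuclideanSpace ℝ (Fin d) => Real.exp (-b * ‖x‖ ^ 2)) := by
  have h := (GaussianFourier.integrable_cexp_neg_mul_sq_norm_add (V := EuclideanSpace ℝ (Fin d))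
      (b := (b : ℂ)) (by simpa using hb) 0 0).norm
  refine h.congr ?_
  filter_upwards with v
  rw [Complex.norm_exp]
  have harg : (-(b:ℂ) * (‖v‖:ℂ) ^ 2 + 0 * ((inner ℝ (0 : EuclideanSpace ℝ (Fin d)) v : ℝ) : ℂ))
      = ((-b * ‖v‖ ^ 2 : ℝ) : ℂ) := by push_cast; ring
  rw [harg, Complex.ofReal_re]

lemma pow_mul_exp_le {b : ℝ} (hb : 0 < b) (k : ℕ) {t : ℝ} (ht : 0 ≤ t) :
    (1 + t) ^ k * Real.exp (-b * t ^ 2) ≤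
      (2 ^ k * (1 + k.factorial * (2 / b) ^ k)) * Real.exp (-(b / 2) * t ^ 2) := by
  have h1 : (1 + t) ^ k ≤ 2 ^ k * (1 + t ^ (2 * k)) := by
    rcases le_total t 1 with h | h
    · calc (1 + t) ^ k ≤ 2 ^ k := pow_le_pow_left₀ (by linarith) (by linarith) k
        _ ≤ 2 ^ k * (1 + t ^ (2 * k)) :=
          le_mul_of_one_le_right (by positivity) (le_add_of_nonneg_right (pow_nonneg ht _))
    · calc (1 + t) ^ k ≤ (2 * t) ^ k := pow_le_pow_left₀ (by linarith) (by linarith) k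
        _ = 2 ^ k * t ^ k := mul_pow _ _ _
        _ ≤ 2 ^ k * t ^ (2 * k) :=
            mul_le_mul_of_nonneg_left (pow_le_pow_right₀ h (by omega)) (by positivity)
        _ ≤ 2 ^ k * (1 + t ^ (2 * k)) :=
            mul_le_mul_of_nonneg_left (le_add_of_nonneg_left zero_le_one) (by positivity)
  have h2 : t ^ (2 * k) ≤ k.factorial * (2 / b) ^ k * Real.exp ((b / 2) * t ^ 2) := by
    have hx : (0:ℝ) ≤ (b / 2) * t ^ 2 := by positivity
    have h3 := Real.pow_div_factorial_le_exp _ hx k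
    rw [mul_pow, ← pow_mul] at h3
    rw [div_le_iff₀ (by positivity : (0:ℝ) < (k.factorial : ℝ))] at h3
    have hbk : (0:ℝ) < (b / 2) ^ k := by positivity
    calc t ^ (2 * k) = ((b / 2) ^ k * t ^ (2 * k)) / (b / 2) ^ k := by field_simp
      _ ≤ (Real.exp ((b / 2) * t ^ 2) * k.factorial) / (b / 2) ^ k := by gcongr
      _ = k.factorial * (2 / b) ^ k * Real.exp ((b / 2) * t ^ 2) := by
          rw [div_eq_mul_inv, ← inv_pow, inv_div]
          ring
  have hexp : Real.exp (-b * t ^ 2) ≤ Real.exp (-(b / 2) * t ^ 2) := by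
    apply Real.exp_le_exp.mpr; nlinarith [sq_nonneg t]
  calc (1 + t) ^ k * Real.exp (-b * t ^ 2)
      ≤ (2 ^ k * (1 + t ^ (2 * k))) * Real.exp (-b * t ^ 2) := by
        exact mul_le_mul_of_nonneg_right h1 (Real.exp_pos _).le
    _ = 2 ^ k * Real.exp (-b * t ^ 2) + 2 ^ k * (t ^ (2 * k) * Real.exp (-b * t ^ 2)) := by ring
    _ ≤ 2 ^ k * Real.exp (-(b / 2) * t ^ 2) +
        2 ^ k * ((k.factorial * (2 / b) ^ k * Real.exp ((b / 2) * t ^ 2)) * Real.exp (-b * t ^ 2)) := by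
        gcongr
    _ = 2 ^ k * Real.exp (-(b / 2) * t ^ 2) +
        2 ^ k * (k.factorial * (2 / b) ^ k) * Real.exp ((b / 2) * t ^ 2 + -b * t ^ 2) := by
        rw [Real.exp_add]; ring
    _ = (2 ^ k * (1 + k.factorial * (2 / b) ^ k)) * Real.exp (-(b / 2) * t ^ 2) := by
        have : (b / 2) * t ^ 2 + -b * t ^ 2 = -(b / 2) * t ^ 2 := by ring
        rw [this]; ring

lemma integrable_gauss_poly {b : ℝ} (hb : 0 < b) (k : ℕ) :
    Integrable (fun x : EuclideanSpace ℝ (Fin d) => (1 + ‖x‖) ^ k * Real.exp (-b * ‖x‖ ^ 2)) := by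
  refine ((integrable_gauss_aux (half_pos hb)).const_mul
      (2 ^ k * (1 + k.factorial * (2 / b) ^ k))).mono' ?_ ?_
  · exact Continuous.aestronglyMeasurable (by fun_prop)
  · filter_upwards with x
    rw [Real.norm_eq_abs, abs_of_nonneg (by positivity)]
    have h := pow_mul_exp_le hb k (norm_nonneg x)
    calc (1 + ‖x‖) ^ k * Real.exp (-b * ‖x‖ ^ 2)
        ≤ (2 ^ k * (1 + k.factorial * (2 / b) ^ k)) * Real.exp (-(b / 2) * ‖x‖ ^ 2) := h
      _ = (2 ^ k * (1 + k.factorial * (2 / b) ^ k)) * Real.exp (-(b / 2) * ‖x‖ ^ 2) := rfl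

lemma integrable_dom0 {Y : Type*} [NormedAddCommGroup Y] {f : EuclideanSpace ℝ (Fin d) → Y}
    (hf : AEStronglyMeasurable f (volume : Measure (EuclideanSpace ℝ (Fin d))))
    {b C : ℝ} (hb : 0 < b) (k : ℕ)
    (h : ∀ x, ‖f x‖ ≤ C * ((1 + ‖x‖) ^ k * Real.exp (-b * ‖x‖ ^ 2))) :
    Integrable f := by
  exact ((integrable_gauss_poly hb k).const_mul C).mono' hf (Filter.Eventually.of_forall h)

lemma integrable_dom {Y : Type*} [NormedAddCommGroup Y] {f : EuclideanSpace ℝ (Fin d) → Y}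
    (hf : AEStronglyMeasurable f (volume : Measure (EuclideanSpace ℝ (Fin d))))
    {b C : ℝ} (hb : 0 < b) (k : ℕ) (m : EuclideanSpace ℝ (Fin d))
    (h : ∀ x, ‖f x‖ ≤ C * ((1 + ‖x - m‖) ^ k * Real.exp (-b * ‖x - m‖ ^ 2))) :
    Integrable f := by
  have hint : Integrable (fun x : EuclideanSpace ℝ (Fin d) =>
      C * ((1 + ‖x - m‖) ^ k * Real.exp (-b * ‖x - m‖ ^ 2))) :=
    ((integrable_gauss_poly hb k).const_mul C).comp_sub_right m
  exact hint.mono' hf (Filter.Eventually.of_forall h)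

lemma one_add_add_pow_le {a t : ℝ} (ha : 0 ≤ a) (ht : 0 ≤ t) (k : ℕ) :
    (1 + (a + t)) ^ k ≤ (1 + a) ^ k * (1 + t) ^ k := by
  rw [← mul_pow]
  exact pow_le_pow_left₀ (by positivity) (by nlinarith) k


set_option maxHeartbeats 1000000
set_option synthInstance.maxHeartbeats 400000

/-- Mean-gradient Stein identity for a single isotropic Gaussian: the gradient of
`m ↦ KL(N(m, εI_d) | π)` exists, equals `E_{N(m,εI_d)}[∇ log(p_m/π)]`, and that expectation
equals `E_{N(m,εI_d)}[∇V]`. -/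
theorem kl_mean_gradient_single_gaussian
    (d : ℕ) (hd : 1 ≤ d)
    (V : EuclideanSpace ℝ (Fin d) → ℝ)
    (hV : ContDiff ℝ 1 V)
    (hVgrowth : ∃ (C : ℝ) (k : ℕ), ∀ x, |V x| ≤ C * (1 + ‖x‖) ^ k)
    (hgradVgrowth : ∃ (C : ℝ) (k : ℕ), ∀ x, ‖gradient V x‖ ≤ C * (1 + ‖x‖) ^ k)
    (hint : Integrable (fun x => Real.exp (-V x)))
    (πd : EuclideanSpace ℝ (Fin d) → ℝ)
    (hπd : ∀ x, πd x = Real.exp (-V x) / ∫ y, Real.exp (-V y))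
    (ε : ℝ) (hε : 0 < ε) (m : EuclideanSpace ℝ (Fin d)) :
    HasGradientAt
      (fun mm : EuclideanSpace ℝ (Fin d) =>
        ∫ x, gaussPDF d mm ε x * Real.log (gaussPDF d mm ε x / πd x))
      (∫ x, gaussPDF d m ε x •
        gradient (fun y => Real.log (gaussPDF d m ε y / πd y)) x)
      m ∧
    (∫ x, gaussPDF d m ε x •
        gradient (fun y => Real.log (gaussPDF d m ε y / πd y)) x) =
      ∫ x, gaussPDF d m ε x • gradient V x := by
  classical
  obtain ⟨CV, kV, hCV⟩ := hVgrowth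
  obtain ⟨CG, kG, hCG⟩ := hgradVgrowth
  have hCV0 : 0 ≤ CV := by
    have h := hCV 0
    simp only [norm_zero, add_zero, one_pow, mul_one] at h
    exact le_trans (abs_nonneg _) h
  have hCG0 : 0 ≤ CG := by
    have h := hCG 0
    simp only [norm_zero, add_zero, one_pow, mul_one] at h
    exact le_trans (norm_nonneg _) h
  have hVdiff : Differentiable ℝ V := hV.differentiable one_ne_zero
  have hVcont : Continuous V := hV.continuous
  have hfderivcont : Continuous (fderiv ℝ V) := hV.continuous_fderiv one_ne_zero
  have hgradcont : Continuous (gradient V) := by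
    have : gradient V = fun x =>
        (InnerProductSpace.toDual ℝ (EuclideanSpace ℝ (Fin d))).symm (fderiv ℝ V x) := rfl
    rw [this]
    exact (InnerProductSpace.toDual ℝ (EuclideanSpace ℝ (Fin d))).symm.continuous.comp
      hfderivcont
  have hgradnorm : ∀ z, ‖fderiv ℝ V z‖ = ‖gradient V z‖ := fun z =>
    ((InnerProductSpace.toDual ℝ (EuclideanSpace ℝ (Fin d))).symm.norm_map
      (fderiv ℝ V z)).symm
  set b : ℝ := (2 * ε)⁻¹ with hbdef
  have hb : 0 < b := by positivity
  set c : ℝ := (2 * Real.pi * ε) ^ (-(d : ℝ) / 2) with hcdef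
  have hc : 0 < c := Real.rpow_pos_of_pos (by positivity) _
  have hgauss_eq : ∀ (mm x : EuclideanSpace ℝ (Fin d)),
      gaussPDF d mm ε x = c * Real.exp (-b * ‖x - mm‖ ^ 2) := by
    intro mm x
    have h : -‖x - mm‖ ^ 2 / (2 * ε) = -b * ‖x - mm‖ ^ 2 := by
      rw [hbdef]; field_simp
    rw [gaussPDF, h, hcdef]
  set g0 : EuclideanSpace ℝ (Fin d) → ℝ := fun y => c * Real.exp (-b * ‖y‖ ^ 2) with hg0def
  have hg0pos : ∀ y, 0 < g0 y := fun y => by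
    rw [hg0def]; positivity
  have hg0cont : Continuous g0 := by
    rw [hg0def]; fun_prop
  have hgauss_shift : ∀ (mm y : EuclideanSpace ℝ (Fin d)),
      gaussPDF d mm ε (y + mm) = g0 y := by
    intro mm y
    rw [hgauss_eq, hg0def, add_sub_cancel_right]
  have hgausspos : ∀ mm x, 0 < gaussPDF d mm ε x := fun mm x => by
    rw [hgauss_eq]; positivity
  set Z : ℝ := ∫ y, Real.exp (-V y) with hZdef
  have hZpos : 0 < Z := by
    rw [hZdef, integral_pos_iff_support_of_nonneg (fun x => (Real.exp_pos _).le) hint]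
    have hsupp : (Function.support fun x : EuclideanSpace ℝ (Fin d) => Real.exp (-V x))
        = Set.univ := by
      ext x; simp [Function.support, (Real.exp_pos (-V x)).ne']
    rw [hsupp]
    exact isOpen_univ.measure_pos volume Set.univ_nonempty
  have hπpos : ∀ x, 0 < πd x := fun x => by
    rw [hπd]; exact div_pos (Real.exp_pos _) hZpos
  set A0 : ℝ := Real.log c + Real.log Z with hA0def
  have hlog : ∀ (mm x : EuclideanSpace ℝ (Fin d)),
      Real.log (gaussPDF d mm ε x / πd x) = A0 + (-b) * ‖x - mm‖ ^ 2 + V x := by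
    intro mm x
    rw [Real.log_div (hgausspos mm x).ne' (hπpos x).ne', hgauss_eq,
      Real.log_mul hc.ne' (Real.exp_ne_zero _), Real.log_exp, hπd,
      Real.log_div (Real.exp_pos _).ne' hZpos.ne', Real.log_exp, hA0def]
    ring
  -- integrability of the gradient-type integrands
  have hgausscont : Continuous (fun x => gaussPDF d m ε x) := by
    have : (fun x => gaussPDF d m ε x) = fun x => c * Real.exp (-b * ‖x - m‖ ^ 2) :=
      funext fun x => hgauss_eq m x
    rw [this]; fun_prop
  have honeadd : ∀ (a : ℝ) (x mm : EuclideanSpace ℝ (Fin d)), 0 ≤ a →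
      ‖mm‖ ≤ a → ∀ k : ℕ, (1 + ‖x‖) ^ k ≤ (1 + a) ^ k * (1 + ‖x - mm‖) ^ k := by
    intro a x mm ha hmm k
    have h1 : ‖x‖ ≤ a + ‖x - mm‖ := by
      calc ‖x‖ = ‖mm + (x - mm)‖ := by rw [add_sub_cancel]
        _ ≤ ‖mm‖ + ‖x - mm‖ := norm_add_le _ _
        _ ≤ a + ‖x - mm‖ := by linarith
    calc (1 + ‖x‖) ^ k ≤ (1 + (a + ‖x - mm‖)) ^ k :=
          pow_le_pow_left₀ (by positivity) (by linarith) k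
      _ ≤ (1 + a) ^ k * (1 + ‖x - mm‖) ^ k :=
          one_add_add_pow_le ha (norm_nonneg _) k
  have Int2 : Integrable (fun x => gaussPDF d m ε x • gradient V x) := by
    apply integrable_dom (b := b) (C := c * (CG * (1 + ‖m‖) ^ kG)) (k := kG) (m := m)
      ((hgausscont.smul hgradcont).aestronglyMeasurable) hb
    intro x
    show ‖gaussPDF d m ε x • gradient V x‖ ≤ _
    rw [norm_smul, Real.norm_eq_abs, abs_of_pos (hgausspos m x), hgauss_eq]
    calc c * Real.exp (-b * ‖x - m‖ ^ 2) * ‖gradient V x‖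
        ≤ c * Real.exp (-b * ‖x - m‖ ^ 2) * (CG * ((1 + ‖m‖) ^ kG * (1 + ‖x - m‖) ^ kG)) := by
          gcongr
          exact (hCG x).trans
            (mul_le_mul_of_nonneg_left (honeadd ‖m‖ x m (norm_nonneg m) le_rfl kG) hCG0)
      _ = c * (CG * (1 + ‖m‖) ^ kG) * ((1 + ‖x - m‖) ^ kG * Real.exp (-b * ‖x - m‖ ^ 2)) := by
          ring
  have Int1 : Integrable (fun x => gaussPDF d m ε x • (x - m)) := by
    apply integrable_dom (b := b) (C := c) (k := 1) (m := m)
      ((hgausscont.smul (continuous_id.sub continuous_const)).aestronglyMeasurable) hb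
    intro x
    show ‖gaussPDF d m ε x • (x - m)‖ ≤ _
    rw [norm_smul, Real.norm_eq_abs, abs_of_pos (hgausspos m x), hgauss_eq]
    calc c * Real.exp (-b * ‖x - m‖ ^ 2) * ‖x - m‖
        ≤ c * Real.exp (-b * ‖x - m‖ ^ 2) * (1 + ‖x - m‖) := by
          gcongr; linarith [norm_nonneg (x - m)]
      _ = c * ((1 + ‖x - m‖) ^ 1 * Real.exp (-b * ‖x - m‖ ^ 2)) := by ring
  have hzero : (∫ x, gaussPDF d m ε x • (x - m)) = 0 := by
    have h1 : (∫ x, gaussPDF d m ε x • (x - m)) = ∫ y, g0 y • y := by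
      rw [← integral_add_right_eq_self (μ := volume)
        (fun x => gaussPDF d m ε x • (x - m)) m]
      congr 1; funext y
      rw [hgauss_shift, add_sub_cancel_right]
    rw [h1]
    have h2 : -∫ y, g0 y • y = ∫ y, g0 y • y := by
      calc -∫ y, g0 y • y = ∫ y, g0 (-y) • (-y) := by
            rw [← integral_neg]; congr 1; funext y
            rw [hg0def]; simp
        _ = ∫ y, g0 y • y :=
            integral_neg_eq_self (fun y : EuclideanSpace ℝ (Fin d) => g0 y • y) volume
    rw [neg_eq_iff_add_eq_zero, ← two_smul ℝ] at h2
    exact (smul_eq_zero.mp h2).resolve_left two_ne_zero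
  have hgradlog : ∀ x : EuclideanSpace ℝ (Fin d),
      gradient (fun y => Real.log (gaussPDF d m ε y / πd y)) x
        = (-2 * b) • (x - m) + gradient V x := by
    intro x
    have hfun : (fun y => Real.log (gaussPDF d m ε y / πd y))
        = fun y => A0 + (-b) * ‖y - m‖ ^ 2 + V y := funext fun y => hlog m y
    rw [hfun]
    have hsq : HasFDerivAt (fun y : EuclideanSpace ℝ (Fin d) => ‖y - m‖ ^ 2)
        (2 • (innerSL ℝ (x - m))) x := by
      have h := ((hasFDerivAt_id x).sub_const m).norm_sq
      simpa using h
    have hD : HasFDerivAt (fun y => A0 + (-b) * ‖y - m‖ ^ 2 + V y)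
        ((-b) • (2 • (innerSL ℝ (x - m))) + fderiv ℝ V x) x :=
      ((hsq.const_mul (-b)).const_add A0).add (hVdiff x).hasFDerivAt
    have hG : HasGradientAt (fun y => A0 + (-b) * ‖y - m‖ ^ 2 + V y)
        ((-2 * b) • (x - m) + gradient V x) x := by
      rw [hasGradientAt_iff_hasFDerivAt]
      refine hD.congr_fderiv ?_
      apply ContinuousLinearMap.ext
      intro y
      simp only [InnerProductSpace.toDual_apply_apply, ContinuousLinearMap.add_apply,
        ContinuousLinearMap.smul_apply, innerSL_apply_apply, inner_add_left, inner_smul_left,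
        smul_eq_mul, nsmul_eq_mul]
      have hgv : (inner ℝ (gradient V x) y : ℝ) = (fderiv ℝ V x) y := by
        simp only [gradient]
        rw [← InnerProductSpace.toDual_apply_apply, LinearIsometryEquiv.apply_symm_apply]
      rw [hgv]
      simp only [starRingEnd_apply, star_trivial]
      ring
    exact hG.gradient
  have hsec : (∫ x, gaussPDF d m ε x •
      gradient (fun y => Real.log (gaussPDF d m ε y / πd y)) x)
      = ∫ x, gaussPDF d m ε x • gradient V x := by
    have h1 : ∀ x : EuclideanSpace ℝ (Fin d), gaussPDF d m ε x •
        gradient (fun y => Real.log (gaussPDF d m ε y / πd y)) x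
        = (-2 * b) • (gaussPDF d m ε x • (x - m)) + gaussPDF d m ε x • gradient V x := by
      intro x
      rw [hgradlog x, smul_add, smul_comm]
    simp only [h1]
    have Int1' : Integrable (fun x => (-2 * b) • (gaussPDF d m ε x • (x - m))) :=
      Int1.smul (-2 * b)
    rw [integral_add Int1' Int2, integral_smul, hzero, smul_zero, zero_add]
  -- decomposition of the KL objective
  have IntA : Integrable (fun y : EuclideanSpace ℝ (Fin d) =>
      g0 y * (A0 + (-b) * ‖y‖ ^ 2)) := by
    apply integrable_dom0 (b := b) (C := c * (|A0| + b)) (k := 2)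
      ((hg0cont.mul (by fun_prop)).aestronglyMeasurable) hb
    intro x
    simp only [Pi.mul_apply]
    rw [Real.norm_eq_abs, abs_mul, abs_of_pos (hg0pos x), hg0def]
    calc c * Real.exp (-b * ‖x‖ ^ 2) * |A0 + (-b) * ‖x‖ ^ 2|
        ≤ c * Real.exp (-b * ‖x‖ ^ 2) * ((|A0| + b) * (1 + ‖x‖) ^ 2) := by
          gcongr
          calc |A0 + (-b) * ‖x‖ ^ 2| ≤ |A0| + b * ‖x‖ ^ 2 := by
                refine (abs_add_le _ _).trans ?_
                rw [abs_mul, abs_neg, abs_of_pos hb, abs_of_nonneg (sq_nonneg ‖x‖)]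
            _ ≤ (|A0| + b) * (1 + ‖x‖) ^ 2 := by
                nlinarith [abs_nonneg A0, norm_nonneg x, sq_nonneg (‖x‖), hb.le,
                  sq_nonneg (1 + ‖x‖)]
      _ = c * (|A0| + b) * ((1 + ‖x‖) ^ 2 * Real.exp (-b * ‖x‖ ^ 2)) := by ring
  have IntPhi : ∀ mm : EuclideanSpace ℝ (Fin d),
      Integrable (fun y : EuclideanSpace ℝ (Fin d) => g0 y * V (y + mm)) := by
    intro mm
    apply integrable_dom0 (b := b) (C := c * (CV * (1 + ‖mm‖) ^ kV)) (k := kV)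
      ((hg0cont.mul (hVcont.comp (continuous_id.add continuous_const))).aestronglyMeasurable) hb
    intro y
    simp only [Pi.mul_apply, Function.comp_apply, Pi.add_apply, id_eq]
    rw [Real.norm_eq_abs, abs_mul, abs_of_pos (hg0pos y), hg0def]
    calc c * Real.exp (-b * ‖y‖ ^ 2) * |V (y + mm)|
        ≤ c * Real.exp (-b * ‖y‖ ^ 2) * (CV * ((1 + ‖mm‖) ^ kV * (1 + ‖y‖) ^ kV)) := by
          gcongr
          refine (hCV (y + mm)).trans ?_
          have h1 : ‖y + mm‖ ≤ ‖mm‖ + ‖y‖ := by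
            rw [add_comm y mm]; exact norm_add_le _ _
          have h2 : (1 + ‖y + mm‖) ^ kV ≤ (1 + (‖mm‖ + ‖y‖)) ^ kV :=
            pow_le_pow_left₀ (by positivity) (by linarith) kV
          have h3 := one_add_add_pow_le (norm_nonneg mm) (norm_nonneg y) kV
          exact mul_le_mul_of_nonneg_left (h2.trans h3) hCV0
      _ = c * (CV * (1 + ‖mm‖) ^ kV) * ((1 + ‖y‖) ^ kV * Real.exp (-b * ‖y‖ ^ 2)) := by ring
  have hKL : ∀ mm : EuclideanSpace ℝ (Fin d),
      (∫ x, gaussPDF d mm ε x * Real.log (gaussPDF d mm ε x / πd x))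
      = (∫ y, g0 y * (A0 + (-b) * ‖y‖ ^ 2)) + ∫ y, g0 y * V (y + mm) := by
    intro mm
    have h1 : (fun x => gaussPDF d mm ε x * Real.log (gaussPDF d mm ε x / πd x))
        = fun x => (fun y => g0 y * (A0 + (-b) * ‖y‖ ^ 2) + g0 y * V (y + mm)) (x - mm) := by
      funext x
      simp only
      rw [hlog, hgauss_eq, sub_add_cancel, hg0def]
      ring
    rw [h1, integral_sub_right_eq_self
      (fun y => g0 y * (A0 + (-b) * ‖y‖ ^ 2) + g0 y * V (y + mm)) mm]
    exact integral_add IntA (IntPhi mm)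
  -- differentiation under the integral sign
  have hPhiF : HasFDerivAt (fun mm => ∫ y, g0 y * V (y + mm))
      (∫ y, g0 y • fderiv ℝ V (y + m)) m := by
    apply hasFDerivAt_integral_of_dominated_of_fderiv_le (s := Metric.ball m 1)
      (bound := fun y => (c * (CG * (2 + ‖m‖) ^ kG)) *
        ((1 + ‖y‖) ^ kG * Real.exp (-b * ‖y‖ ^ 2)))
      (F' := fun mm y => g0 y • fderiv ℝ V (y + mm)) (Metric.ball_mem_nhds m one_pos)
    · exact Filter.Eventually.of_forall fun mm =>
        (hg0cont.mul (hVcont.comp (continuous_id.add continuous_const))).aestronglyMeasurable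
    · exact IntPhi m
    · exact (hg0cont.smul (hfderivcont.comp (continuous_id.add continuous_const))).aestronglyMeasurable
    · apply Filter.Eventually.of_forall
      intro y mm hmm
      show ‖g0 y • fderiv ℝ V (y + mm)‖ ≤ (c * (CG * (2 + ‖m‖) ^ kG)) *
        ((1 + ‖y‖) ^ kG * Real.exp (-b * ‖y‖ ^ 2))
      rw [norm_smul, Real.norm_eq_abs, abs_of_pos (hg0pos y), hgradnorm, hg0def]
      have hmmnorm : ‖mm‖ ≤ ‖m‖ + 1 := by
        have := mem_ball_iff_norm.mp hmm
        calc ‖mm‖ = ‖m + (mm - m)‖ := by rw [add_sub_cancel]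
          _ ≤ ‖m‖ + ‖mm - m‖ := norm_add_le _ _
          _ ≤ ‖m‖ + 1 := by linarith
      calc c * Real.exp (-b * ‖y‖ ^ 2) * ‖gradient V (y + mm)‖
          ≤ c * Real.exp (-b * ‖y‖ ^ 2) * (CG * ((1 + (‖m‖ + 1)) ^ kG * (1 + ‖y‖) ^ kG)) := by
            gcongr
            refine (hCG (y + mm)).trans ?_
            have h1 : ‖y + mm‖ ≤ (‖m‖ + 1) + ‖y‖ := by
              calc ‖y + mm‖ ≤ ‖y‖ + ‖mm‖ := norm_add_le _ _
                _ ≤ (‖m‖ + 1) + ‖y‖ := by linarith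
            have h2 : (1 + ‖y + mm‖) ^ kG ≤ (1 + ((‖m‖ + 1) + ‖y‖)) ^ kG :=
              pow_le_pow_left₀ (by positivity) (by linarith) kG
            have h3 := one_add_add_pow_le (by positivity : (0:ℝ) ≤ ‖m‖ + 1) (norm_nonneg y) kG
            exact mul_le_mul_of_nonneg_left (h2.trans h3) hCG0
        _ = (c * (CG * (2 + ‖m‖) ^ kG)) * ((1 + ‖y‖) ^ kG * Real.exp (-b * ‖y‖ ^ 2)) := by
            have : (1 : ℝ) + (‖m‖ + 1) = 2 + ‖m‖ := by ring
            rw [this]; ring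
    · exact (integrable_gauss_poly hb kG).const_mul _
    · apply Filter.Eventually.of_forall
      intro y mm hmm
      have h3 : HasFDerivAt (fun mm' : EuclideanSpace ℝ (Fin d) => y + mm')
          (ContinuousLinearMap.id ℝ (EuclideanSpace ℝ (Fin d))) mm :=
        (hasFDerivAt_id mm).const_add y
      have h1 : HasFDerivAt (fun mm' => V (y + mm')) (fderiv ℝ V (y + mm)) mm := by
        have h4 := (hVdiff (y + mm)).hasFDerivAt.comp mm h3
        rw [ContinuousLinearMap.comp_id] at h4
        exact h4
      exact h1.const_mul (g0 y)
  have hPhiG : HasGradientAt (fun mm => ∫ y, g0 y * V (y + mm))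
      (∫ y, g0 y • gradient V (y + m)) m := by
    rw [hasGradientAt_iff_hasFDerivAt]
    have heq : (InnerProductSpace.toDual ℝ (EuclideanSpace ℝ (Fin d)))
        (∫ y, g0 y • gradient V (y + m)) = ∫ y, g0 y • fderiv ℝ V (y + m) := by
      calc (InnerProductSpace.toDual ℝ (EuclideanSpace ℝ (Fin d)))
            (∫ y, g0 y • gradient V (y + m))
          = (InnerProductSpace.toDual ℝ (EuclideanSpace ℝ (Fin d))).toLinearIsometry
            (∫ y, g0 y • gradient V (y + m)) := by
            simp only [LinearIsometryEquiv.coe_toLinearIsometry]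
        _ = ∫ y, (InnerProductSpace.toDual ℝ (EuclideanSpace ℝ (Fin d))).toLinearIsometry
            (g0 y • gradient V (y + m)) :=
            (LinearIsometry.integral_comp_comm _ _).symm
        _ = ∫ y, g0 y • fderiv ℝ V (y + m) := by
            congr 1; funext y
            simp only [LinearIsometryEquiv.coe_toLinearIsometry, _root_.map_smul]
            congr 1
            simp only [gradient]
            exact (InnerProductSpace.toDual ℝ _).apply_symm_apply _
    rw [heq]
    exact hPhiF
  have hGV : (∫ x, gaussPDF d m ε x • gradient V x) = ∫ y, g0 y • gradient V (y + m) := by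
    rw [← integral_add_right_eq_self (μ := volume)
      (fun x => gaussPDF d m ε x • gradient V x) m]
    congr 1; funext y
    rw [hgauss_shift]
  constructor
  · have hfun : (fun mm : EuclideanSpace ℝ (Fin d) =>
        ∫ x, gaussPDF d mm ε x * Real.log (gaussPDF d mm ε x / πd x))
        = fun mm => (∫ y, g0 y * (A0 + (-b) * ‖y‖ ^ 2)) + ∫ y, g0 y * V (y + mm) :=
      funext hKL
    rw [hfun, hsec, hGV]
    rw [hasGradientAt_iff_hasFDerivAt]
    exact (hPhiG.hasFDerivAt).const_add _
  · exact hsec
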